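/- Let S ≥ 2 and K > 0, and define g(p) = (1/S)·Σ_{s=0}^{S} C(S,s)·s·( pˢ(1−p)^{S−s} + (1−p)ˢp^{S−s} )·Φ((2s−S−1)K), where Φ is the standard normal CDF. Then g(1/2) ≥ 1/2, and therefore g(p) ≥ 1/2 for all p ∈ [0,1] (since g attains its minimum at p = 1/2). -/

import Mathlib

/-- The standard normal CDF. -/
noncomputable def stdNormalCDF (x : ℝ) : ℝ :=
  ∫ t in Set.Iic x, (Real.sqrt (2 * Real.pi))⁻¹ * Real.exp (-t^2 / 2)

/-- g(p) = (1/S)·Σ_{s=0}^{S} C(S,s)·s·( pˢ(1−p)^{S−s} + (1−p)ˢ p^{S−s} )·Φ((2s−S−1)K). -/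
noncomputable def g (S : ℕ) (K p : ℝ) : ℝ :=
  (1 / S : ℝ) * ∑ s ∈ Finset.range (S + 1),
    (S.choose s : ℝ) * (s : ℝ) * (p^s * (1 - p)^(S - s) + (1 - p)^s * p^(S - s)) *
      stdNormalCDF ((2 * s - S - 1 : ℝ) * K)

open MeasureTheory Real Finset

/-! ### Auxiliary facts about the standard normal CDF -/

noncomputable def gaussφ (t : ℝ) : ℝ := (Real.sqrt (2 * Real.pi))⁻¹ * Real.exp (-t^2 / 2)

lemma gaussφ_nonneg (t : ℝ) : 0 ≤ gaussφ t :=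
  mul_nonneg (inv_nonneg.2 (Real.sqrt_nonneg _)) (Real.exp_pos _).le

lemma gaussφ_int : Integrable gaussφ := by
  have h : Integrable (fun t : ℝ => Real.exp (-(1/2 : ℝ) * t ^ 2)) :=
    integrable_exp_neg_mul_sq (by norm_num)
  have h2 := h.const_mul ((Real.sqrt (2 * Real.pi))⁻¹)
  refine h2.congr (Filter.Eventually.of_forall fun t => ?_)
  unfold gaussφ
  ring_nf

lemma gaussφ_total : ∫ t, gaussφ t = 1 := by
  have h : (∫ t, gaussφ t) = ∫ t : ℝ, (Real.sqrt (2 * Real.pi))⁻¹ * Real.exp (-(1/2:ℝ) * t ^ 2) := by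
    congr 1; funext t; unfold gaussφ; ring_nf
  rw [h, integral_const_mul, integral_gaussian]
  rw [show (Real.pi / (1/2)) = 2 * Real.pi by ring]
  exact inv_mul_cancel₀ (by positivity)

lemma gaussφ_even (t : ℝ) : gaussφ (-t) = gaussφ t := by unfold gaussφ; rw [neg_sq]

lemma cdf_eq (x : ℝ) : stdNormalCDF x = ∫ t in Set.Iic x, gaussφ t := rfl

lemma cdf_add_neg (x : ℝ) : stdNormalCDF x + stdNormalCDF (-x) = 1 := by
  have h1 : stdNormalCDF (-x) = ∫ t in Set.Ioi x, gaussφ t := by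
    rw [cdf_eq]
    have : (∫ t in Set.Iic (-x), gaussφ t) = ∫ t in Set.Iic (-x), gaussφ (-t) := by
      simp_rw [gaussφ_even]
    rw [this, integral_comp_neg_Iic, neg_neg]
  rw [cdf_eq, h1, intervalIntegral.integral_Iic_add_Ioi gaussφ_int.integrableOn
    gaussφ_int.integrableOn, gaussφ_total]

lemma cdf_mono {x y : ℝ} (h : x ≤ y) : stdNormalCDF x ≤ stdNormalCDF y := by
  rw [cdf_eq, cdf_eq]
  refine setIntegral_mono_set gaussφ_int.integrableOn ?_ ?_
  · filter_upwards with t using gaussφ_nonneg t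
  · exact (Set.Iic_subset_Iic.2 h).eventuallyLE

lemma cdf_zero : stdNormalCDF 0 = 1/2 := by
  have := cdf_add_neg 0
  rw [neg_zero] at this; linarith

lemma cdf_ge_half {x : ℝ} (h : 0 ≤ x) : 1/2 ≤ stdNormalCDF x := cdf_zero ▸ cdf_mono h

lemma cdf_le_half {x : ℝ} (h : x ≤ 0) : stdNormalCDF x ≤ 1/2 := cdf_zero ▸ cdf_mono h

/-! ### Combinatorial part -/

lemma pow_ineq (p q : ℝ) (hp0 : 0 ≤ p) (hq0 : 0 ≤ q) (m d : ℕ) :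
    p^(m+1) * q^(m+d) + q^(m+1) * p^(m+d) ≤ p^(m+d+1) * q^m + q^(m+d+1) * p^m := by
  have h1 : 0 ≤ (p - q) * (p^d - q^d) := by
    rcases le_total q p with h | h
    · nlinarith [pow_le_pow_left₀ hq0 h d]
    · nlinarith [pow_le_pow_left₀ hp0 h d]
  have h2 : 0 ≤ p^m * q^m := mul_nonneg (pow_nonneg hp0 m) (pow_nonneg hq0 m)
  have key : p^(m+d+1) * q^m + q^(m+d+1) * p^m - (p^(m+1) * q^(m+d) + q^(m+1) * p^(m+d))
      = (p^m * q^m) * ((p - q) * (p^d - q^d)) := by ring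
  nlinarith [mul_nonneg h2 h1]

lemma binom_sum (n : ℕ) (p q : ℝ) (h : p + q = 1) :
    ∑ j ∈ Finset.range (n+1), (n.choose j : ℝ) * (p^(j+1) * q^(n-j) + q^(j+1) * p^(n-j)) = 1 := by
  have hb := add_pow p q n
  have hb' := add_pow q p n
  have e : ∑ j ∈ Finset.range (n+1), (n.choose j : ℝ) * (p^(j+1) * q^(n-j) + q^(j+1) * p^(n-j))
      = p * ∑ j ∈ Finset.range (n+1), p^j * q^(n-j) * (n.choose j : ℝ)
        + q * ∑ j ∈ Finset.range (n+1), q^j * p^(n-j) * (n.choose j : ℝ) := by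
    rw [Finset.mul_sum, Finset.mul_sum, ← Finset.sum_add_distrib]
    exact Finset.sum_congr rfl fun j _ => by ring
  rw [e, ← hb, ← hb', h, add_comm q p, h]
  norm_num
  linarith

lemma key_ineq (n : ℕ) (K p : ℝ) (hK : 0 < K) (hp0 : 0 ≤ p) (hp1 : p ≤ 1) :
    1/2 ≤ ∑ j ∈ Finset.range (n+1),
      (n.choose j : ℝ) * (p^(j+1) * (1-p)^(n-j) + (1-p)^(j+1) * p^(n-j)) *
        stdNormalCDF ((2*j - n) * K) := by
  set q : ℝ := 1 - p with hq
  have hq0 : 0 ≤ q := by rw [hq]; linarith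
  have hpq : p + q = 1 := by rw [hq]; ring
  set w : ℕ → ℝ := fun j => (n.choose j : ℝ) * (p^(j+1) * q^(n-j) + q^(j+1) * p^(n-j)) with hw
  have wrefl : ∀ j, j ≤ n → w (n - j) = (n.choose j : ℝ) * (p^((n-j)+1) * q^j + q^((n-j)+1) * p^j) := by
    intro j hj
    rw [hw]
    simp only [Nat.choose_symm hj, Nat.sub_sub_self hj]
  have wmono : ∀ j, j ≤ n → n ≤ 2*j → w (n - j) ≤ w j := by
    intro j hj h2
    rw [wrefl j hj, hw]
    refine mul_le_mul_of_nonneg_left ?_ (by positivity)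
    obtain ⟨m, d, hmj, hmn⟩ : ∃ m d, j = m + d ∧ n - j = m :=
      ⟨n - j, j - (n - j), by omega, rfl⟩
    rw [hmn, hmj]
    exact pow_ineq p q hp0 hq0 m d
  have sumw : ∑ j ∈ Finset.range (n+1), w j = 1 := binom_sum n p q hpq
  have sumw' : ∑ j ∈ Finset.range (n+1), w (n - j) = 1 := by
    have h := Finset.sum_range_reflect w (n+1)
    simp only [Nat.add_sub_cancel] at h
    rw [h]; exact sumw
  have sumG : ∑ j ∈ Finset.range (n+1), w (n - j) * stdNormalCDF (-((2*(j:ℝ) - n) * K))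
      = ∑ j ∈ Finset.range (n+1), w j * stdNormalCDF ((2*(j:ℝ) - n) * K) := by
    have hrefl := Finset.sum_range_reflect
        (fun j : ℕ => w (n - j) * stdNormalCDF (-((2*(j:ℝ) - n) * K))) (n+1)
    rw [← hrefl]
    refine Finset.sum_congr rfl fun j hj => ?_
    have hjn : j ≤ n := by have := Finset.mem_range.mp hj; omega
    have h1 : n + 1 - 1 - j = n - j := by omega
    have h2 : n - (n - j) = j := by omega
    have h3 : ((n - j : ℕ) : ℝ) = (n : ℝ) - j := by
      rw [Nat.cast_sub hjn]
    simp only [h1, h2, h3]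
    have h4 : -((2*((n:ℝ) - j) - n) * K) = (2*(j:ℝ) - n) * K := by ring
    rw [h4]
  have per : ∀ j ∈ Finset.range (n+1), (w j + w (n - j))/2
      ≤ w j * stdNormalCDF ((2*(j:ℝ) - n) * K)
        + w (n - j) * stdNormalCDF (-((2*(j:ℝ) - n) * K)) := by
    intro j hj
    have hjn : j ≤ n := by have := Finset.mem_range.mp hj; omega
    have hΦ : stdNormalCDF (-((2*(j:ℝ) - n) * K)) = 1 - stdNormalCDF ((2*(j:ℝ) - n) * K) := by
      have := cdf_add_neg ((2*(j:ℝ) - n) * K); linarith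
    have hsign : 0 ≤ (w j - w (n - j)) * (stdNormalCDF ((2*(j:ℝ) - n) * K) - 1/2) := by
      rcases le_or_gt n (2*j) with h | h
      · have hx0 : (0:ℝ) ≤ (2*(j:ℝ) - n) * K := by
          apply mul_nonneg _ hK.le
          have : (n : ℝ) ≤ 2*j := by exact_mod_cast h
          linarith
        exact mul_nonneg (by linarith [wmono j hjn h]) (by linarith [cdf_ge_half hx0])
      · have hx0 : (2*(j:ℝ) - n) * K ≤ 0 := by
          apply mul_nonpos_of_nonpos_of_nonneg _ hK.le
          have : (2*(j:ℝ)) ≤ n := by exact_mod_cast h.le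
          linarith
        have hmono : w j ≤ w (n - j) := by
          have h2 : n ≤ 2*(n - j) := by omega
          have h3 : n - j ≤ n := by omega
          have := wmono (n - j) h3 h2
          rwa [show n - (n - j) = j by omega] at this
        nlinarith [cdf_le_half hx0]
    rw [hΦ]
    nlinarith [hsign]
  have step := Finset.sum_le_sum per
  rw [Finset.sum_add_distrib, sumG] at step
  have lhs : ∑ j ∈ Finset.range (n+1), (w j + w (n - j))/2 = 1 := by
    have : ∑ j ∈ Finset.range (n+1), (w j + w (n - j))/2
        = (∑ j ∈ Finset.range (n+1), w j + ∑ j ∈ Finset.range (n+1), w (n - j))/2 := by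
      rw [← Finset.sum_add_distrib, ← Finset.sum_div]
    rw [this, sumw, sumw']; norm_num
  rw [lhs] at step
  linarith [step]

lemma g_eq (n : ℕ) (K p : ℝ) :
    g (n+1) K p = ∑ j ∈ Finset.range (n+1),
      (n.choose j : ℝ) * (p^(j+1) * (1-p)^(n-j) + (1-p)^(j+1) * p^(n-j)) *
        stdNormalCDF ((2*(j:ℝ) - n) * K) := by
  unfold g
  rw [Finset.sum_range_succ']
  simp only [Nat.cast_zero, mul_zero, zero_mul, add_zero, Nat.succ_sub_succ]
  rw [Finset.mul_sum]
  refine Finset.sum_congr rfl fun j hj => ?_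
  have hc : (((n+1).choose (j+1) : ℕ) : ℝ) * ((j:ℝ)+1) = ((n:ℝ)+1) * (n.choose j : ℝ) := by
    exact_mod_cast (Nat.add_one_mul_choose_eq n j).symm
  have hn : ((n:ℝ)+1) ≠ 0 := by positivity
  have harg : (2*((j:ℝ)+1) - ((n:ℝ)+1) - 1) * K = (2*(j:ℝ) - n) * K := by ring
  push_cast
  rw [harg]
  field_simp
  simp only [mul_comm (j:ℝ) 2]
  linear_combination (p^(j+1)*(1-p)^(n-j) + (1-p)^(j+1)*p^(n-j)) *
    stdNormalCDF ((2*(j:ℝ) - n) * K) * hc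

/-- g(1/2) ≥ 1/2, and g(p) ≥ 1/2 for all p ∈ [0,1]. -/
theorem stmt_7 (S : ℕ) (hS : 2 ≤ S) (K : ℝ) (hK : 0 < K) :
    g S K (1/2) ≥ 1/2 ∧ ∀ p ∈ Set.Icc (0:ℝ) 1, g S K p ≥ 1/2 := by
  have main : ∀ p ∈ Set.Icc (0:ℝ) 1, g S K p ≥ 1/2 := by
    intro p hp
    obtain ⟨n, rfl⟩ : ∃ n, S = n + 1 := ⟨S - 1, by omega⟩
    rw [g_eq]
    exact key_ineq n K p hK hp.1 hp.2
  exact ⟨main (1/2) (by norm_num), main⟩
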